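/- Let d ≥ 1, A ≤ 0, and for g ∈ ℝ^d, z ∈ ℂ^d define Λ_g(z) = (1−4A)^{d/4}·exp(A‖g‖₂² + √(1−4A)·(Σ_{i=1}^d g_i z_i) − (Σ_{i=1}^d z_i²)/2) ∈ ℂ. Then for all x, w ∈ ℝ^d and b ∈ ℝ, sin(⟨x,w⟩ + b) = 𝔼_{g∼N(0,I_d)}[Im(exp(ib) · Λ_g(i·x) · Λ_g(w))], where i·x ∈ ℂ^d is the entrywise multiplication of x by the imaginary unit and Λ_g(w) is real. -/

import Mathlib

open MeasureTheory ProbabilityTheory Real RealInnerProductSpace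
open scoped NNReal ENNReal


lemma gauss_smul (f : ℝ → ℂ) :
    ∫ t, f t ∂(gaussianReal 0 1) = ∫ t : ℝ, gaussianPDFReal 0 1 t • f t := by
  rw [gaussianReal_of_var_ne_zero 0 one_ne_zero]
  have h : gaussianPDF 0 1 = fun x => (((gaussianPDFReal 0 1 x).toNNReal : ℝ≥0) : ℝ≥0∞) := rfl
  rw [h, integral_withDensity_eq_integral_smul (measurable_gaussianPDFReal 0 1).real_toNNReal]
  congr 1; funext t
  rw [NNReal.smul_def, Real.coe_toNNReal _ (gaussianPDFReal_nonneg _ _ _)]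

lemma gauss_integrable_iff (f : ℝ → ℂ) :
    Integrable f (gaussianReal 0 1) ↔
      Integrable (fun t : ℝ => gaussianPDFReal 0 1 t • f t) := by
  rw [gaussianReal_of_var_ne_zero 0 one_ne_zero]
  have h : gaussianPDF 0 1 = fun x => (((gaussianPDFReal 0 1 x).toNNReal : ℝ≥0) : ℝ≥0∞) := rfl
  rw [h, integrable_withDensity_iff_integrable_smul (measurable_gaussianPDFReal 0 1).real_toNNReal]
  constructor <;> intro h <;> [skip; skip] <;>
  · refine h.congr (Filter.Eventually.of_forall fun t => ?_)
    simp only [NNReal.smul_def, Real.coe_toNNReal _ (gaussianPDFReal_nonneg 0 1 t)]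

lemma pdf01 (t : ℝ) : gaussianPDFReal 0 1 t = (Real.sqrt (2*π))⁻¹ * Real.exp (-t^2/2) := by
  simp [gaussianPDFReal]

lemma pdf_smul (A : ℝ) (c d : ℂ) (t : ℝ) :
    gaussianPDFReal 0 1 t • Complex.exp ((2*A : ℂ) * t^2 + c * t + d)
      = (((Real.sqrt (2*π))⁻¹ : ℝ) : ℂ) * Complex.exp (((2*A : ℂ) - 1/2) * t^2 + c * t + d) := by
  rw [pdf01, Complex.real_smul, Complex.ofReal_mul, mul_assoc]
  congr 1
  rw [Complex.ofReal_exp, ← Complex.exp_add]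
  congr 1
  push_cast
  ring

lemma hbneg (A : ℝ) (hA : A ≤ 0) : ((2*A : ℂ) - 1/2).re < 0 := by
  simp [Complex.sub_re]; linarith

lemma key1_integrable (A : ℝ) (hA : A ≤ 0) (c d : ℂ) :
    Integrable (fun t : ℝ => Complex.exp ((2*A : ℂ) * t^2 + c * t + d)) (gaussianReal 0 1) := by
  rw [gauss_integrable_iff]
  refine (((integrable_cexp_quadratic' (hbneg A hA) c d)).const_mul
    ((((Real.sqrt (2*π))⁻¹ : ℝ) : ℂ))).congr (Filter.Eventually.of_forall fun t => ?_)
  exact (pdf_smul A c d t).symm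

lemma key1 (A : ℝ) (hA : A ≤ 0) (c d : ℂ) :
    ∫ t, Complex.exp ((2*A : ℂ) * t^2 + c * t + d) ∂(gaussianReal 0 1)
      = (((1 - 4*A) ^ (-(1:ℝ)/2) : ℝ) : ℂ) * Complex.exp (d + c^2 / (2*(1 - 4*A))) := by
  have h4 : (0:ℝ) < 1 - 4*A := by linarith
  rw [gauss_smul]
  simp only [pdf_smul A c d]
  rw [integral_const_mul, integral_cexp_quadratic (hbneg A hA)]
  have hbase : (↑π / -((2*A : ℂ) - 1/2)) = ((2*π/(1-4*A) : ℝ) : ℂ) := by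
    push_cast
    rw [div_eq_div_iff]
    · ring
    · simp only [neg_sub]
      intro hc
      rw [sub_eq_zero] at hc
      have := congrArg Complex.re hc
      simp at this
      linarith
    · intro hc
      have := congrArg Complex.re hc
      simp at this
      linarith
  rw [hbase]
  have : ((2*π/(1-4*A) : ℝ) : ℂ) ^ (1/2 : ℂ) = (((2*π/(1-4*A)) ^ ((1:ℝ)/2) : ℝ) : ℂ) := by
    rw [show (1/2 : ℂ) = (((1:ℝ)/2 : ℝ) : ℂ) by norm_num,
      ← Complex.ofReal_cpow (le_of_lt (div_pos (by positivity) h4))]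
  rw [this]
  have e1 : (2*π/(1-4*A)) ^ ((1:ℝ)/2) = Real.sqrt (2*π) / Real.sqrt (1-4*A) := by
    rw [← Real.sqrt_eq_rpow, Real.sqrt_div (by positivity)]
  have e2 : (1-4*A) ^ (-(1:ℝ)/2) = (Real.sqrt (1-4*A))⁻¹ := by
    rw [neg_div, Real.rpow_neg h4.le, ← Real.sqrt_eq_rpow]
  have hconst : (Real.sqrt (2*π))⁻¹ * ((2*π/(1-4*A)) ^ ((1:ℝ)/2)) = (1 - 4*A) ^ (-(1:ℝ)/2) := by
    rw [e1, e2]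
    have h1 : Real.sqrt (2*π) ≠ 0 := by positivity
    field_simp
  have hexp : d - c^2 / (4 * ((2*A : ℂ) - 1/2)) = d + c^2 / (2*(1 - 4*A)) := by
    rw [show (4*((2*A:ℂ) - 1/2)) = -(2*((1:ℂ) - 4*A)) by ring, div_neg, sub_neg_eq_add]
  rw [hexp, ← hconst]
  push_cast
  ring

/-- The standard Gaussian probability measure `N(0, I_d)` on `ℝ^d`. -/
noncomputable def stdGaussian (d : ℕ) : Measure (EuclideanSpace ℝ (Fin d)) :=
  (Measure.pi fun _ => gaussianReal 0 1).map (MeasurableEquiv.toLp 2 (Fin d → ℝ))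

/-- The complex-valued positive random feature map
`Λ_g(z) = (1-4A)^{d/4} exp(A‖g‖² + √(1-4A)·Σ gᵢzᵢ − (Σ zᵢ²)/2)` for `g ∈ ℝ^d`, `z ∈ ℂ^d`. -/
noncomputable def lambdaC (d : ℕ) (A : ℝ) (g : EuclideanSpace ℝ (Fin d))
    (z : Fin d → ℂ) : ℂ :=
  (((1 - 4 * A) ^ ((d : ℝ) / 4) : ℝ) : ℂ) *
    Complex.exp (((A * ‖g‖ ^ 2 : ℝ) : ℂ)
      + ((Real.sqrt (1 - 4 * A) : ℝ) : ℂ) * (∑ i, (g i : ℂ) * z i)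
      - (∑ i, z i ^ 2) / 2)

theorem stmt_12 (d : ℕ) (hd : 1 ≤ d) (A : ℝ) (hA : A ≤ 0)
    (x w : EuclideanSpace ℝ (Fin d)) (b : ℝ) :
    Real.sin (⟪x, w⟫ + b) =
      ∫ g, (Complex.exp (Complex.I * b) *
          lambdaC d A g (fun j => Complex.I * (x j : ℂ)) *
          lambdaC d A g (fun j => ((w j : ℝ) : ℂ))).im ∂(stdGaussian d) := by
  have h4 : (0:ℝ) < 1 - 4 * A := by linarith
  have hne : ((1:ℂ) - 4*A) ≠ 0 := by
    intro hc
    have := congrArg Complex.re hc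
    simp at this
    linarith
  have hsq : ((Real.sqrt (1-4*A) : ℝ) : ℂ)^2 = (1:ℂ) - 4*A := by
    rw [← Complex.ofReal_pow, Real.sq_sqrt h4.le]
    push_cast; ring
  set F : Fin d → ℝ → ℂ := fun j t =>
    Complex.exp ((2*A:ℂ) * t^2
      + ((Real.sqrt (1-4*A) : ℂ) * (Complex.I * (x j : ℂ) + (w j : ℂ))) * t
      + (((x j : ℂ))^2 - ((w j : ℂ))^2)/2) with hFdef
  set E0 : ℂ := Complex.exp (Complex.I * b) * (((1 - 4*A) ^ ((d:ℝ)/4) : ℝ) : ℂ)^2 with hE0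
  have hpoint : ∀ g : EuclideanSpace ℝ (Fin d),
      Complex.exp (Complex.I * b) * lambdaC d A g (fun j => Complex.I * (x j : ℂ)) *
        lambdaC d A g (fun j => ((w j : ℝ) : ℂ))
      = E0 * ∏ j, F j (g j) := by
    intro g
    have hg : ((A * ‖g‖^2 : ℝ) : ℂ) = (A:ℂ) * ∑ j, (g j : ℂ)^2 := by
      rw [EuclideanSpace.norm_eq, Real.sq_sqrt (by positivity)]
      push_cast [Real.norm_eq_abs, sq_abs]
      ring
    have key : Complex.exp (((A * ‖g‖ ^ 2 : ℝ) : ℂ)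
          + ((Real.sqrt (1 - 4 * A) : ℝ) : ℂ) * (∑ i, (g i : ℂ) * (Complex.I * (x i : ℂ)))
          - (∑ i, (Complex.I * (x i : ℂ)) ^ 2) / 2) *
        Complex.exp (((A * ‖g‖ ^ 2 : ℝ) : ℂ)
          + ((Real.sqrt (1 - 4 * A) : ℝ) : ℂ) * (∑ i, (g i : ℂ) * (w i : ℂ))
          - (∑ i, ((w i : ℝ) : ℂ) ^ 2) / 2)
        = ∏ j, F j (g j) := by
      simp only [hFdef]
      rw [← Complex.exp_add, ← Complex.exp_sum]
      congr 1
      rw [hg]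
      simp only [Finset.mul_sum, Finset.sum_div, ← Finset.sum_add_distrib,
        ← Finset.sum_sub_distrib]
      refine Finset.sum_congr rfl fun j _ => ?_
      linear_combination (-((x j : ℂ))^2/2) * Complex.I_sq
    simp only [lambdaC, hE0]
    rw [← key]
    ring
  have hFint : ∀ j, Integrable (F j) (gaussianReal 0 1) := fun j => key1_integrable A hA _ _
  have key2 : ∀ j, ∫ t, F j t ∂(gaussianReal 0 1)
      = (((1-4*A) ^ (-(1:ℝ)/2) : ℝ) : ℂ) * Complex.exp (Complex.I * (x j : ℂ) * (w j : ℂ)) := by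
    intro j
    simp only [hFdef]
    rw [key1 A hA]
    congr 1
    rw [mul_pow, hsq, show ((2:ℂ)*((1:ℂ) - 4*A)) = ((1:ℂ) - 4*A) * 2 by ring,
      mul_div_mul_left _ _ hne]
    congr 1
    linear_combination (((x j : ℂ))^2/2) * Complex.I_sq
  have hprod : ∫ g, ∏ j, F j (g j) ∂(stdGaussian d) = ∏ j, ∫ t, F j t ∂(gaussianReal 0 1) := by
    letI : MeasureSpace ℝ := ⟨gaussianReal 0 1⟩
    haveI : SigmaFinite (volume : Measure ℝ) := inferInstanceAs (SigmaFinite (gaussianReal 0 1))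
    rw [_root_.stdGaussian, integral_map_equiv]
    exact MeasureTheory.integral_fintype_prod_eq_prod F
  have hint2 : Integrable (fun g => ∏ j, F j (g j)) (stdGaussian d) := by
    letI : MeasureSpace ℝ := ⟨gaussianReal 0 1⟩
    haveI : SigmaFinite (volume : Measure ℝ) := inferInstanceAs (SigmaFinite (gaussianReal 0 1))
    rw [_root_.stdGaussian, integrable_map_equiv]
    exact MeasureTheory.Integrable.fintype_prod hFint
  have hip : ⟪x, w⟫ = ∑ j, x j * w j := by
    simp [PiLp.inner_apply, RCLike.inner_apply, conj_trivial]
    exact Finset.sum_congr rfl fun _ _ => mul_comm _ _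
  have hC : (((1-4*A) ^ ((d:ℝ)/4) : ℝ) : ℂ)^2 * (((1-4*A) ^ (-(1:ℝ)/2) : ℝ) : ℂ)^d = 1 := by
    rw [← Complex.ofReal_pow, ← Complex.ofReal_pow, ← Complex.ofReal_mul]
    rw [show ((1-4*A) ^ ((d:ℝ)/4))^2 * ((1-4*A) ^ (-(1:ℝ)/2))^d = 1 from ?_, Complex.ofReal_one]
    rw [← Real.rpow_natCast ((1-4*A) ^ ((d:ℝ)/4)) 2, ← Real.rpow_natCast ((1-4*A) ^ (-(1:ℝ)/2)) d,
      ← Real.rpow_mul h4.le, ← Real.rpow_mul h4.le, ← Real.rpow_add h4]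
    rw [show (d:ℝ)/4 * (2:ℕ) + (-(1:ℝ)/2) * (d:ℕ) = 0 by push_cast; ring, Real.rpow_zero]
  calc Real.sin (⟪x, w⟫ + b)
      = (E0 * ∏ j, ∫ t, F j t ∂(gaussianReal 0 1)).im := by
        simp only [key2, Finset.prod_mul_distrib, Finset.prod_const, Finset.card_univ, Fintype.card_fin, ← Complex.exp_sum]
        rw [hE0, show (∑ j, Complex.I * (x j : ℂ) * (w j : ℂ))
            = Complex.I * ((⟪x, w⟫ : ℝ) : ℂ) from ?_]
        · rw [show Complex.exp (Complex.I * b) * (((1 - 4*A) ^ ((d:ℝ)/4) : ℝ) : ℂ)^2 *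
              ((((1-4*A) ^ (-(1:ℝ)/2) : ℝ) : ℂ)^d * Complex.exp (Complex.I * ((⟪x, w⟫ : ℝ) : ℂ)))
              = (((1 - 4*A) ^ ((d:ℝ)/4) : ℝ) : ℂ)^2 * (((1-4*A) ^ (-(1:ℝ)/2) : ℝ) : ℂ)^d *
                (Complex.exp (Complex.I * b) * Complex.exp (Complex.I * ((⟪x, w⟫ : ℝ) : ℂ))) by ring,
            hC, one_mul, ← Complex.exp_add,
            show Complex.I * (b : ℂ) + Complex.I * ((⟪x, w⟫ : ℝ) : ℂ)
              = ((⟪x, w⟫ + b : ℝ) : ℂ) * Complex.I by push_cast; ring,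
            Complex.exp_ofReal_mul_I_im]
        · rw [hip]
          push_cast
          rw [Finset.mul_sum]
          exact Finset.sum_congr rfl fun j _ => by ring
    _ = ∫ g, (E0 * ∏ j, F j (g j)).im ∂(stdGaussian d) := by
        rw [← hprod, ← integral_const_mul]
        exact (integral_im (hint2.const_mul E0)).symm
    _ = ∫ g, (Complex.exp (Complex.I * b) *
          lambdaC d A g (fun j => Complex.I * (x j : ℂ)) *
          lambdaC d A g (fun j => ((w j : ℝ) : ℂ))).im ∂(stdGaussian d) := by
        refine integral_congr_ae (Filter.Eventually.of_forall fun g => ?_)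
        exact congrArg Complex.im (hpoint g).symm
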